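/- In a (01)-formal matrix ring of the form K₀, for pairwise distinct indices i,j,k one has s_ijk = 1 if and only if s_iji = 1 or s_jkj = 1. Consequently, the principal multiplier matrix (s_iji) determines all multipliers s_ijk. -/
import Mathlib

/-- In a (01)-multiplier system of the form `K₀`, for pairwise
distinct `i, j, k` one has `s i j k = 1` iff `s i j i = 1` or `s j k j = 1`;
hence the principal multiplier matrix determines all multipliers. -/
theorem K0_multiplier_formula {R : Type*} [Ring R] [Nontrivial R] (n : ℕ)
    (s : Fin n → Fin n → Fin n → R)
    (hcent : ∀ i j k (r : R), s i j k * r = r * s i j k)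
    (h1 : ∀ i k, s i i k = 1) (h2 : ∀ i k, s i k k = 1)
    (hmul : ∀ i j k l, s i j k * s i k l = s i j l * s j k l)
    (h01 : ∀ i j k, s i j k = 0 ∨ s i j k = 1)
    (hK0 : ∀ i j k : Fin n, i ≠ j → j ≠ k → i ≠ k →
      s i j i = 0 → s j k j = 0 → s i j k = 0)
    (i j k : Fin n) (hij : i ≠ j) (hjk : j ≠ k) (hik : i ≠ k) :
    s i j k = 1 ↔ (s i j i = 1 ∨ s j k j = 1) := by
  have e1 : s i j i = s i j k * s j i k := by
    have := hmul i j i k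
    simpa [h1, h2] using this
  have e2 : s i j k * s i k j = s j k j := by
    have := hmul i j k j
    simpa [h1, h2] using this
  constructor
  · intro h
    by_contra hc
    push_neg at hc
    have hA : s i j i = 0 := (h01 i j i).resolve_right hc.1
    have hB : s j k j = 0 := (h01 j k j).resolve_right hc.2
    have := hK0 i j k hij hjk hik hA hB
    rw [h] at this
    exact one_ne_zero this
  · rintro (h | h)
    · rcases h01 i j k with h0 | h0
      · rw [h0, zero_mul] at e1
        exact absurd (h.symm.trans e1) one_ne_zero
      · exact h0
    · rcases h01 i j k with h0 | h0
      · rw [h0, zero_mul] at e2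
        exact absurd (e2.trans h) zero_ne_one
      · exact h0
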